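/- Let Q^+(q,t) ∈ ℤ⟦q,t⟧ be the unique power series with no constant term satisfying the recursion q^+ = q + ∑_{r≥3} (t + t^2 + ⋯ + t^{r-2}) · (h_r ∘ q^+), where h_r ∘ f denotes plethysm with the complete homogeneous symmetric function. Then q^+ also satisfies the exponential equation Exp(t·q^+) = t^2·Exp(q^+) + (1-t)(1+t+qt). -/

import Mathlib

noncomputable section

/-- The ring `ℚ⟦q,t⟧` of formal power series in two variables. -/
abbrev QT := MvPowerSeries (Fin 2) ℚ

namespace QT

/-- The variable `q`. -/
def q : QT := MvPowerSeries.X 0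
/-- The variable `t`. -/
def t : QT := MvPowerSeries.X 1

/-- Total degree of a monomial exponent. -/
def deg (d : Fin 2 →₀ ℕ) : ℕ := d 0 + d 1

/-- The substitution `f(q,t) ↦ f(q^r, t^r)`. -/
def raise (r : ℕ) (f : QT) : QT := fun d =>
  if ∀ i, r ∣ d i then
    MvPowerSeries.coeff (R := ℚ) (d.mapRange (· / r) (Nat.zero_div r)) f
  else 0

/-- `∑_{r ≥ 1} f(q^r,t^r)/r`, defined coefficientwise (for `f` with zero constant
term only the finitely many `r` dividing the exponent contribute). -/
def plethSum (f : QT) : QT := fun d =>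
  ∑ r ∈ Finset.Icc 1 (deg d), ((r : ℚ)⁻¹) * MvPowerSeries.coeff (R := ℚ) d (raise r f)

/-- The ordinary formal exponential `exp g = ∑_m g^m/m!`, defined coefficientwise
(valid for `g` with zero constant term). -/
def mExp (g : QT) : QT := fun d =>
  ∑ m ∈ Finset.range (deg d + 1),
    ((m.factorial : ℚ)⁻¹) * MvPowerSeries.coeff (R := ℚ) d (g ^ m)

/-- The plethystic exponential `Exp f = exp (∑_{r≥1} f(q^r,t^r)/r)`. -/
def PExp (f : QT) : QT := mExp (plethSum f)

end QT

end
/-- `z_λ = ∏_i i^{m_i}·m_i!` for a partition `λ` with `m_i` parts equal to `i`. -/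
def zPartition {n : ℕ} (lam : n.Partition) : ℕ :=
  ∏ i ∈ lam.parts.toFinset, i ^ lam.parts.count i * (lam.parts.count i).factorial

namespace QT

/-- Plethysm with the complete homogeneous symmetric function:
`h_r ∘ f = ∑_{λ ⊢ r} z_λ⁻¹ ∏_i f(q^{λ_i}, t^{λ_i})`. -/
noncomputable def hPleth (r : ℕ) (f : QT) : QT :=
  ∑ lam : r.Partition,
    ((zPartition lam : ℚ)⁻¹) • (lam.parts.map (fun i => raise i f)).prod

end QT

-- ==================== auxiliary lemmas ====================

namespace QT

open MvPowerSeries Finset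

lemma deg_add (a b : Fin 2 →₀ ℕ) : deg (a + b) = deg a + deg b := by
  simp only [deg, Finsupp.add_apply]; ring

lemma deg_eq_zero {d : Fin 2 →₀ ℕ} (h : deg d = 0) : d = 0 := by
  have h0 : d 0 = 0 := by unfold deg at h; omega
  have h1 : d 1 = 0 := by unfold deg at h; omega
  ext i
  fin_cases i
  · simpa using h0
  · simpa using h1

/-- `A` has order `≥ n`. -/
def OrdGE (n : ℕ) (A : QT) : Prop :=
  ∀ d, deg d < n → MvPowerSeries.coeff (R := ℚ) d A = 0

lemma OrdGE.mono {m n : ℕ} {A : QT} (h : OrdGE n A) (hmn : m ≤ n) : OrdGE m A :=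
  fun d hd => h d (lt_of_lt_of_le hd hmn)

lemma ordGE_of_constantCoeff {A : QT} (h : MvPowerSeries.constantCoeff (σ := Fin 2) (R := ℚ) A = 0) :
    OrdGE 1 A := by
  intro d hd
  have hd0 : d = 0 := deg_eq_zero (by omega)
  subst hd0
  simpa [MvPowerSeries.coeff_zero_eq_constantCoeff] using h

lemma OrdGE.smul {n : ℕ} {A : QT} (h : OrdGE n A) (c : ℚ) : OrdGE n (c • A) := fun d hd => by
  rw [MvPowerSeries.coeff_smul, h d hd, mul_zero]

lemma OrdGE.mul {a b : ℕ} {A B : QT} (hA : OrdGE a A) (hB : OrdGE b B) :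
    OrdGE (a + b) (A * B) := by
  classical
  intro d hd
  rw [MvPowerSeries.coeff_mul]
  refine Finset.sum_eq_zero fun p hp => ?_
  rw [Finset.HasAntidiagonal.mem_antidiagonal] at hp
  have hdeg : deg p.1 + deg p.2 = deg d := by rw [← deg_add, hp]
  rcases lt_or_ge (deg p.1) a with h1 | h1
  · rw [hA _ h1, zero_mul]
  · rw [hB _ (by omega), mul_zero]

lemma OrdGE.pow {a : ℕ} {A : QT} (hA : OrdGE a A) (n : ℕ) : OrdGE (n * a) (A ^ n) := by
  induction n with
  | zero => exact fun d hd => absurd hd (by omega)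
  | succ n ih =>
    rw [pow_succ]
    have := ih.mul hA
    simpa [Nat.succ_mul] using this

lemma ordGE_sum {ι : Type*} (s : Finset ι) (n : ℕ) (A : ι → QT)
    (h : ∀ i ∈ s, OrdGE n (A i)) : OrdGE n (∑ i ∈ s, A i) := fun d hd => by
  rw [map_sum]
  exact Finset.sum_eq_zero fun i hi => h i hi d hd

lemma ordGE_prod {ι : Type*} (s : Finset ι) (w : ι → ℕ) (A : ι → QT)
    (h : ∀ i ∈ s, OrdGE (w i) (A i)) : OrdGE (∑ i ∈ s, w i) (∏ i ∈ s, A i) := by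
  induction s using Finset.cons_induction with
  | empty => exact fun d hd => absurd hd (by simp)
  | cons a s ha ih =>
    rw [Finset.prod_cons, Finset.sum_cons]
    exact (h a (Finset.mem_cons_self _ _)).mul
      (ih fun i hi => h i (Finset.mem_cons.2 (Or.inr hi)))

lemma ordGE_raise {f : QT} (h0 : MvPowerSeries.constantCoeff (σ := Fin 2) (R := ℚ) f = 0) (r : ℕ) :
    OrdGE r (raise r f) := by
  intro d hd
  show raise r f d = 0
  unfold raise
  split_ifs with h
  · by_cases hdz : d = 0
    · subst hdz
      have h1 : (0 : Fin 2 →₀ ℕ).mapRange (· / r) (Nat.zero_div r) = 0 := by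
        ext i; simp
      rw [h1]
      simpa [MvPowerSeries.coeff_zero_eq_constantCoeff] using h0
    · exfalso
      obtain ⟨i, hi⟩ : ∃ i, d i ≠ 0 := by
        by_contra hc
        push_neg at hc
        exact hdz (Finsupp.ext hc)
      have h2 : r ≤ d i := Nat.le_of_dvd (Nat.pos_of_ne_zero hi) (h i)
      have h3 : d i ≤ deg d := by fin_cases i <;> simp [deg] <;> omega
      omega
  · rfl

lemma ordGE_multiset (m : Multiset ℕ) (f : QT)
    (h0 : MvPowerSeries.constantCoeff (σ := Fin 2) (R := ℚ) f = 0) :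
    OrdGE m.sum ((m.map fun i => raise i f).prod) := by
  induction m using Multiset.induction_on with
  | empty => exact fun d hd => absurd hd (by simp)
  | cons a m ih =>
    rw [Multiset.map_cons, Multiset.prod_cons, Multiset.sum_cons]
    exact (ordGE_raise h0 a).mul ih

lemma ordGE_hPleth {f : QT} (h0 : MvPowerSeries.constantCoeff (σ := Fin 2) (R := ℚ) f = 0) (n : ℕ) :
    OrdGE n (hPleth n f) := by
  intro d hd
  unfold hPleth
  rw [map_sum]
  refine Finset.sum_eq_zero fun lam _ => ?_
  rw [MvPowerSeries.coeff_smul,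
    ordGE_multiset lam.parts f h0 d (by rw [lam.parts_sum]; exact hd), mul_zero]

lemma ordGE_t : OrdGE 1 t :=
  ordGE_of_constantCoeff (by simp [t])

lemma ordGE_t_pow (n : ℕ) : OrdGE n (t ^ n) := by
  simpa using ordGE_t.pow n

/-- Coefficientwise agreement up to total degree `N`. -/
def EqB (N : ℕ) (A B : QT) : Prop :=
  ∀ d, deg d ≤ N → MvPowerSeries.coeff (R := ℚ) d A = MvPowerSeries.coeff (R := ℚ) d B

lemma EqB.refl {N : ℕ} {A : QT} : EqB N A A := fun _ _ => _root_.rfl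

lemma EqB.of_eq {N : ℕ} {A B : QT} (h : A = B) : EqB N A B := by subst h; exact EqB.refl

lemma EqB.symm {N : ℕ} {A B : QT} (h : EqB N A B) : EqB N B A := fun d hd => (h d hd).symm

lemma EqB.trans {N : ℕ} {A B C : QT} (h : EqB N A B) (h' : EqB N B C) : EqB N A C :=
  fun d hd => (h d hd).trans (h' d hd)

lemma EqB.add {N : ℕ} {A B C D : QT} (h : EqB N A B) (h' : EqB N C D) :
    EqB N (A + C) (B + D) := fun d hd => by
  rw [map_add, map_add, h d hd, h' d hd]

lemma EqB.sub {N : ℕ} {A B C D : QT} (h : EqB N A B) (h' : EqB N C D) :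
    EqB N (A - C) (B - D) := fun d hd => by
  rw [map_sub, map_sub, h d hd, h' d hd]

lemma EqB.mul {N : ℕ} {A B C D : QT} (h : EqB N A B) (h' : EqB N C D) :
    EqB N (A * C) (B * D) := by
  classical
  intro d hd
  rw [MvPowerSeries.coeff_mul, MvPowerSeries.coeff_mul]
  refine Finset.sum_congr rfl fun p hp => ?_
  rw [Finset.HasAntidiagonal.mem_antidiagonal] at hp
  have hdeg : deg p.1 + deg p.2 = deg d := by rw [← deg_add, hp]
  rw [h p.1 (by omega), h' p.2 (by omega)]

lemma EqB.pow {N : ℕ} {A B : QT} (h : EqB N A B) (m : ℕ) : EqB N (A ^ m) (B ^ m) := by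
  induction m with
  | zero => exact EqB.refl
  | succ m ih => rw [pow_succ, pow_succ]; exact ih.mul h

lemma coeff_raise (r : ℕ) (f : QT) (d : Fin 2 →₀ ℕ) :
    MvPowerSeries.coeff (R := ℚ) d (raise r f) =
      if ∀ i, r ∣ d i then
        MvPowerSeries.coeff (R := ℚ) (d.mapRange (· / r) (Nat.zero_div r)) f
      else 0 := rfl

lemma raise_t_mul (r : ℕ) (hr : 0 < r) (f : QT) : raise r (t * f) = t ^ r * raise r f := by
  ext d
  have htr : (t : QT) ^ r = MvPowerSeries.monomial (R := ℚ) (Finsupp.single 1 r) 1 :=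
    MvPowerSeries.X_pow_eq 1 r
  have ht : (t : QT) * f = MvPowerSeries.monomial (R := ℚ) (Finsupp.single 1 1) 1 * f := by
    rw [← MvPowerSeries.X_def]; rfl
  rw [htr, MvPowerSeries.coeff_monomial_mul, coeff_raise, coeff_raise]
  by_cases h : ∀ i, r ∣ d i
  · rw [if_pos h, ht, MvPowerSeries.coeff_monomial_mul]
    by_cases h2 : r ≤ d 1
    · have hms : Finsupp.single (1 : Fin 2) 1 ≤ d.mapRange (· / r) (Nat.zero_div r) := by
        rw [Finsupp.single_le_iff]
        show 1 ≤ d 1 / r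
        rw [Nat.one_le_div_iff hr]
        exact h2
      have hs : Finsupp.single (1 : Fin 2) r ≤ d := Finsupp.single_le_iff.mpr h2
      have hdvd : ∀ i : Fin 2, r ∣ (d - Finsupp.single (1 : Fin 2) r) i := by
        intro i
        rw [Finsupp.tsub_apply]
        by_cases hi : i = 1
        · subst hi
          rw [Finsupp.single_eq_same]
          exact Nat.dvd_sub (h 1) dvd_rfl
        · rw [Finsupp.single_eq_of_ne hi, Nat.sub_zero]
          exact h i
      rw [if_pos hms, if_pos hs, one_mul, one_mul, if_pos hdvd]
      have hee : d.mapRange (· / r) (Nat.zero_div r) - Finsupp.single (1 : Fin 2) 1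
          = (d - Finsupp.single (1 : Fin 2) r).mapRange (· / r) (Nat.zero_div r) := by
        ext i
        rw [Finsupp.tsub_apply, Finsupp.mapRange_apply, Finsupp.mapRange_apply, Finsupp.tsub_apply]
        by_cases hi : i = 1
        · subst hi
          rw [Finsupp.single_eq_same, Finsupp.single_eq_same]
          obtain ⟨m, hm⟩ := h 1
          rw [hm, Nat.mul_div_cancel_left m hr]
          have hmm : r * m - r = r * (m - 1) := by rw [Nat.mul_sub]; omega
          rw [hmm, Nat.mul_div_cancel_left _ hr]
        · rw [Finsupp.single_eq_of_ne hi, Finsupp.single_eq_of_ne hi,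
            Nat.sub_zero, Nat.sub_zero]
      rw [hee]
    · have hms : ¬ Finsupp.single (1 : Fin 2) 1 ≤ d.mapRange (· / r) (Nat.zero_div r) := by
        rw [Finsupp.single_le_iff]
        show ¬ 1 ≤ d 1 / r
        rw [Nat.one_le_div_iff hr]
        exact h2
      have hs : ¬ Finsupp.single (1 : Fin 2) r ≤ d := fun hc => h2 (Finsupp.single_le_iff.mp hc)
      rw [if_neg hms, if_neg hs]
  · rw [if_neg h]
    by_cases hs : Finsupp.single (1 : Fin 2) r ≤ d
    · rw [if_pos hs, one_mul, if_neg]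
      intro hc
      apply h
      intro i
      by_cases hi : i = 1
      · subst hi
        have hc1 := hc 1
        rw [Finsupp.tsub_apply, Finsupp.single_eq_same] at hc1
        have h2 : r ≤ d 1 := Finsupp.single_le_iff.mp hs
        have : d 1 = (d 1 - r) + r := by omega
        rw [this]
        exact Nat.dvd_add hc1 dvd_rfl
      · have hci := hc i
        rwa [Finsupp.tsub_apply, Finsupp.single_eq_of_ne hi, Nat.sub_zero] at hci
    · rw [if_neg hs]

lemma pow_multiset_sum (m : Multiset ℕ) (x : QT) : x ^ m.sum = (m.map (x ^ ·)).prod := by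
  induction m using Multiset.induction_on with
  | empty => simp
  | cons a s ih => simp [pow_add, ih]

lemma hPleth_t_mul (n : ℕ) (f : QT) : hPleth n (t * f) = t ^ n * hPleth n f := by
  unfold hPleth
  rw [Finset.mul_sum]
  refine Finset.sum_congr rfl fun lam _ => ?_
  have h1 : lam.parts.map (fun i => raise i (t * f))
      = lam.parts.map (fun i => t ^ i * raise i f) :=
    Multiset.map_congr rfl fun i hi => raise_t_mul i (lam.parts_pos hi) f
  have h2 : (lam.parts.map fun i => t ^ i).prod = t ^ n := by
    rw [← pow_multiset_sum, lam.parts_sum]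
  rw [h1, Multiset.prod_map_mul, h2, mul_smul_comm]

lemma EqB_plethSum (f : QT) (h0 : MvPowerSeries.constantCoeff (σ := Fin 2) (R := ℚ) f = 0) (N : ℕ) :
    EqB N (plethSum f) (∑ r ∈ Finset.Icc 1 N, (r : ℚ)⁻¹ • raise r f) := by
  intro e he
  rw [map_sum]
  show plethSum f e = _
  unfold plethSum
  simp_rw [MvPowerSeries.coeff_smul]
  apply Finset.sum_subset (Finset.Icc_subset_Icc_right he)
  intro r hr hnot
  have hlt : deg e < r := by
    simp only [Finset.mem_Icc] at hr hnot
    omega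
  rw [ordGE_raise h0 r e hlt, mul_zero]

lemma prod_smul_qt {ι : Type*} (s : Finset ι) (c : ι → ℚ) (A : ι → QT) :
    ∏ i ∈ s, c i • A i = (∏ i ∈ s, c i) • ∏ i ∈ s, A i := by
  induction s using Finset.cons_induction with
  | empty => simp
  | cons a s ha ih =>
    rw [Finset.prod_cons, Finset.prod_cons, Finset.prod_cons, ih, smul_mul_smul_comm]

lemma mem_le_sum {m : Multiset ℕ} {a : ℕ} (h : a ∈ m) : a ≤ m.sum := by
  induction m using Multiset.induction_on with
  | empty => simp at h
  | cons b s ih =>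
    rw [Multiset.sum_cons]
    rcases Multiset.mem_cons.mp h with h | h
    · omega
    · have := ih h; omega

lemma card_le_sum_parts (m : Multiset ℕ) (h : ∀ x ∈ m, 1 ≤ x) : Multiset.card m ≤ m.sum := by
  induction m using Multiset.induction_on with
  | empty => simp
  | cons a s ih =>
    rw [Multiset.card_cons, Multiset.sum_cons]
    have h1 := h a (Multiset.mem_cons_self a s)
    have h2 := ih fun x hx => h x (Multiset.mem_cons_of_mem hx)
    omega

lemma partition_heq {n₁ n₂ : ℕ} (h : n₁ = n₂) {p₁ : Nat.Partition n₁} {p₂ : Nat.Partition n₂}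
    (hp : p₁.parts = p₂.parts) : HEq p₁ p₂ := by
  subst h
  exact heq_of_eq (Nat.Partition.ext hp)

lemma coeff_PExp (f : QT) (h0 : MvPowerSeries.constantCoeff (σ := Fin 2) (R := ℚ) f = 0) (d : Fin 2 →₀ ℕ) :
    MvPowerSeries.coeff (R := ℚ) d (PExp f)
      = ∑ n ∈ Finset.range (deg d + 1), MvPowerSeries.coeff (R := ℚ) d (hPleth n f) := by
  classical
  set D := deg d with hD
  set s : Finset ℕ := Finset.Icc 1 D with hs
  have hs1 : ∀ r ∈ s, 1 ≤ r := fun r hr => (Finset.mem_Icc.mp hr).1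
  set S : QT := ∑ r ∈ s, (r : ℚ)⁻¹ • raise r f with hS
  -- step 1
  have h1 : MvPowerSeries.coeff (R := ℚ) d (PExp f)
      = ∑ m ∈ Finset.range (D + 1),
          ((m.factorial : ℚ)⁻¹) * MvPowerSeries.coeff (R := ℚ) d (S ^ m) := by
    have e1 : MvPowerSeries.coeff (R := ℚ) d (PExp f)
        = ∑ m ∈ Finset.range (D + 1),
            ((m.factorial : ℚ)⁻¹) * MvPowerSeries.coeff (R := ℚ) d ((plethSum f) ^ m) := rfl
    rw [e1]
    exact Finset.sum_congr rfl fun m _ => by rw [(EqB_plethSum f h0 D).pow m d le_rfl]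
  -- step 2
  have h2 : ∀ m : ℕ, MvPowerSeries.coeff (R := ℚ) d (S ^ m)
      = ∑ k ∈ Finset.piAntidiag s m,
          (Nat.multinomial s k : ℚ) * ((∏ r ∈ s, ((r : ℚ)⁻¹) ^ k r)
            * MvPowerSeries.coeff (R := ℚ) d (∏ r ∈ s, raise r f ^ k r)) := by
    intro m
    rw [hS, Finset.sum_pow_eq_sum_piAntidiag, map_sum]
    refine Finset.sum_congr rfl fun k hk => ?_
    have e2 : ∀ r : ℕ, ((r : ℚ)⁻¹ • raise r f) ^ k r
        = ((r : ℚ)⁻¹) ^ k r • (raise r f) ^ k r := fun r => smul_pow _ _ _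
    simp_rw [e2]
    rw [prod_smul_qt]
    have e3 : ((Nat.multinomial s k : ℕ) : QT)
        = MvPowerSeries.C (σ := Fin 2) (R := ℚ) ((Nat.multinomial s k : ℕ) : ℚ) :=
      (map_natCast (MvPowerSeries.C (σ := Fin 2) (R := ℚ)) _).symm
    rw [e3, MvPowerSeries.coeff_C_mul, MvPowerSeries.coeff_smul]
  -- step 3
  have h3 : MvPowerSeries.coeff (R := ℚ) d (PExp f)
      = ∑ m ∈ Finset.range (D + 1), ∑ k ∈ Finset.piAntidiag s m,
          (∏ r ∈ s, ((r : ℚ) ^ k r * ((k r).factorial : ℚ)))⁻¹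
            * MvPowerSeries.coeff (R := ℚ) d (∏ r ∈ s, raise r f ^ k r) := by
    rw [h1]
    refine Finset.sum_congr rfl fun m _ => ?_
    rw [h2 m, Finset.mul_sum]
    refine Finset.sum_congr rfl fun k hk => ?_
    rw [Finset.mem_piAntidiag] at hk
    obtain ⟨hksum, hksupp⟩ := hk
    have hfacs : ((∏ r ∈ s, ((k r).factorial) : ℕ) : ℚ) * (Nat.multinomial s k : ℚ)
        = (m.factorial : ℚ) := by
      rw [← Nat.cast_mul, Nat.multinomial_spec, hksum]
    have hP2ne : ((∏ r ∈ s, ((k r).factorial) : ℕ) : ℚ) ≠ 0 := by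
      have : 0 < ∏ r ∈ s, ((k r).factorial) := Finset.prod_pos fun r _ => Nat.factorial_pos _
      exact_mod_cast this.ne'
    have hmne : (m.factorial : ℚ) ≠ 0 := by
      exact_mod_cast (Nat.factorial_pos m).ne'
    have hP1ne : (∏ r ∈ s, (r : ℚ) ^ k r) ≠ 0 := by
      refine Finset.prod_ne_zero_iff.mpr fun r hr => pow_ne_zero _ ?_
      have := hs1 r hr
      positivity
    have hPinv : (∏ r ∈ s, ((r : ℚ)⁻¹) ^ k r) = (∏ r ∈ s, (r : ℚ) ^ k r)⁻¹ := by
      rw [← Finset.prod_inv_distrib]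
      exact Finset.prod_congr rfl fun r _ => inv_pow _ _
    have hsplit : (∏ r ∈ s, ((r : ℚ) ^ k r * ((k r).factorial : ℚ)))
        = (∏ r ∈ s, (r : ℚ) ^ k r) * ((∏ r ∈ s, ((k r).factorial) : ℕ) : ℚ) := by
      rw [Finset.prod_mul_distrib, Nat.cast_prod]
    have hkey : (Nat.multinomial s k : ℚ)
        = (m.factorial : ℚ) / ((∏ r ∈ s, ((k r).factorial) : ℕ) : ℚ) := by
      rw [eq_div_iff hP2ne]
      rw [mul_comm]
      exact hfacs
    rw [hPinv, hsplit, hkey, mul_inv]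
    field_simp
  -- step 4: sigma + prune
  set T : ((_ : ℕ) × (ℕ → ℕ)) → ℚ := fun p =>
    (∏ r ∈ s, ((r : ℚ) ^ p.2 r * ((p.2 r).factorial : ℚ)))⁻¹
      * MvPowerSeries.coeff (R := ℚ) d (∏ r ∈ s, raise r f ^ p.2 r) with hT
  set A : Finset ((_ : ℕ) × (ℕ → ℕ)) :=
    (Finset.range (D + 1)).sigma (fun m => Finset.piAntidiag s m) with hA
  have h4 : MvPowerSeries.coeff (R := ℚ) d (PExp f) = ∑ p ∈ A, T p := by
    rw [h3, hA, Finset.sum_sigma]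
  set A' : Finset ((_ : ℕ) × (ℕ → ℕ)) := A.filter (fun p => ∑ r ∈ s, p.2 r * r ≤ D) with hA'
  have h5 : ∑ p ∈ A, T p = ∑ p ∈ A', T p := by
    symm
    apply Finset.sum_filter_of_ne
    intro p hp hne
    by_contra hgt
    push_neg at hgt
    apply hne
    have hz : MvPowerSeries.coeff (R := ℚ) d (∏ r ∈ s, raise r f ^ p.2 r) = 0 := by
      refine ordGE_prod s (fun r => p.2 r * r) _
        (fun r hr => (ordGE_raise h0 r).pow (p.2 r)) d ?_
      show deg d < ∑ r ∈ s, p.2 r * r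
      omega
    rw [hT]
    simp only [hz, mul_zero]
  -- step 5 : RHS as a sigma sum
  set U : ((n : ℕ) × Nat.Partition n) → ℚ := fun b =>
    (zPartition b.2 : ℚ)⁻¹
      * MvPowerSeries.coeff (R := ℚ) d ((b.2.parts.map (fun i => raise i f)).prod) with hU
  set B : Finset ((n : ℕ) × Nat.Partition n) :=
    (Finset.range (D + 1)).sigma (fun n => Finset.univ) with hB
  have h6 : ∑ n ∈ Finset.range (D + 1), MvPowerSeries.coeff (R := ℚ) d (hPleth n f)
      = ∑ b ∈ B, U b := by
    rw [hB, Finset.sum_sigma]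
    refine Finset.sum_congr rfl fun n _ => ?_
    show MvPowerSeries.coeff (R := ℚ) d (hPleth n f) = _
    unfold hPleth
    rw [map_sum]
    exact Finset.sum_congr rfl fun lam _ => by rw [MvPowerSeries.coeff_smul]
  rw [h4, h5, h6]
  -- step 6: the bijection
  set pts : (ℕ → ℕ) → Multiset ℕ :=
    fun k => s.val.bind fun r => Multiset.replicate (k r) r with hpts
  have hcount : ∀ (k : ℕ → ℕ) (a : ℕ), (pts k).count a = if a ∈ s then k a else 0 := by
    intro k a
    rw [hpts]
    simp only
    rw [Multiset.count_bind]
    have e : (Multiset.map (fun r => Multiset.count a (Multiset.replicate (k r) r)) s.val)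
        = Multiset.map (fun r => if r = a then k r else 0) s.val :=
      Multiset.map_congr rfl fun r _ => by rw [Multiset.count_replicate]
    rw [e]
    exact Finset.sum_ite_eq' s a k
  have hsum_pts : ∀ k : ℕ → ℕ, (pts k).sum = ∑ r ∈ s, k r * r := by
    intro k
    rw [hpts]
    simp only
    rw [Multiset.sum_bind]
    have e : (Multiset.map (fun r => (Multiset.replicate (k r) r).sum) s.val)
        = Multiset.map (fun r => k r * r) s.val :=
      Multiset.map_congr rfl fun r _ => by rw [Multiset.sum_replicate, smul_eq_mul]
    rw [e]
    rfl
  have hcard_pts : ∀ k : ℕ → ℕ, Multiset.card (pts k) = ∑ r ∈ s, k r := by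
    intro k
    rw [hpts]
    simp only
    rw [Multiset.card_bind]
    have e : (Multiset.map (Multiset.card ∘ fun r => Multiset.replicate (k r) r) s.val)
        = Multiset.map (fun r => k r) s.val :=
      Multiset.map_congr rfl fun r _ => by simp
    rw [e]
    rfl
  have hmem_pts : ∀ (k : ℕ → ℕ) (a : ℕ), a ∈ pts k ↔ (a ∈ s ∧ k a ≠ 0) := by
    intro k a
    rw [← Multiset.count_pos, hcount]
    by_cases ha : a ∈ s
    · simp [ha, Nat.pos_iff_ne_zero]
    · simp [ha]
  have hpos : ∀ (k : ℕ → ℕ) (i : ℕ), i ∈ pts k → 0 < i :=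
    fun k i hi => hs1 i ((hmem_pts k i).mp hi).1
  set I : ((_ : ℕ) × (ℕ → ℕ)) → ((n : ℕ) × Nat.Partition n) := fun p =>
    ⟨(pts p.2).sum, ⟨pts p.2, fun {i} hi => hpos p.2 i hi, rfl⟩⟩ with hI
  set J : ((n : ℕ) × Nat.Partition n) → ((_ : ℕ) × (ℕ → ℕ)) := fun b =>
    ⟨Multiset.card b.2.parts, fun r => b.2.parts.count r⟩ with hJ
  -- facts about members of B
  have hBparts : ∀ (n : ℕ), n ∈ Finset.range (D + 1) → ∀ (lam : Nat.Partition n),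
      ∀ a ∈ lam.parts, a ∈ s := by
    intro n hn lam a ha
    rw [hs, Finset.mem_Icc]
    constructor
    · exact lam.parts_pos ha
    · have h1 : a ≤ lam.parts.sum := mem_le_sum ha
      rw [lam.parts_sum] at h1
      rw [Finset.mem_range] at hn
      omega
  refine Finset.sum_nbij' I J ?_ ?_ ?_ ?_ ?_
  · -- maps A' to B
    intro p hp
    rw [hA', Finset.mem_filter] at hp
    obtain ⟨hpA, hple⟩ := hp
    rw [hB, Finset.mem_sigma]
    refine ⟨?_, Finset.mem_univ _⟩
    rw [hI]
    simp only
    rw [Finset.mem_range, hsum_pts]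
    omega
  · -- maps B to A'
    intro b hb
    rw [hB, Finset.mem_sigma, Finset.mem_range] at hb
    obtain ⟨hn, -⟩ := hb
    have hmem : ∀ a ∈ b.2.parts, a ∈ s := hBparts b.1 (Finset.mem_range.mpr hn) b.2
    have hsub : b.2.parts.toFinset ⊆ s := fun a ha => hmem a (Multiset.mem_toFinset.mp ha)
    have hcnt_sum : ∑ r ∈ s, b.2.parts.count r = Multiset.card b.2.parts := by
      rw [← Multiset.toFinset_sum_count_eq b.2.parts]
      symm
      apply Finset.sum_subset hsub
      intro x _ hx
      exact Multiset.count_eq_zero.mpr fun hc => hx (Multiset.mem_toFinset.mpr hc)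
    have hwt : ∑ r ∈ s, b.2.parts.count r * r = b.1 := by
      have hws := Finset.sum_multiset_count_of_subset b.2.parts s hsub
      simp only [smul_eq_mul] at hws
      rw [b.2.parts_sum] at hws
      exact hws.symm
    rw [hA', Finset.mem_filter, hA, Finset.mem_sigma, Finset.mem_range]
    refine ⟨⟨?_, ?_⟩, ?_⟩
    · -- card ≤ D
      have h1 : Multiset.card b.2.parts ≤ b.2.parts.sum :=
        card_le_sum_parts _ fun x hx => b.2.parts_pos hx
      rw [b.2.parts_sum] at h1
      rw [hJ]
      simp only
      omega
    · rw [hJ]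
      simp only
      rw [Finset.mem_piAntidiag]
      exact ⟨hcnt_sum, fun i hi => hmem i (Multiset.count_ne_zero.mp hi)⟩
    · rw [hJ]
      simp only
      rw [hwt]
      omega
  · -- J ∘ I = id on A'
    intro p hp
    rw [hA', Finset.mem_filter, hA, Finset.mem_sigma, Finset.mem_range] at hp
    obtain ⟨⟨hm, hk⟩, -⟩ := hp
    rw [Finset.mem_piAntidiag] at hk
    obtain ⟨hksum, hksupp⟩ := hk
    rw [hJ, hI]
    simp only
    refine Sigma.ext ?_ (heq_of_eq ?_)
    · simp only
      rw [hcard_pts, hksum]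
    · simp only
      funext r
      rw [hcount]
      by_cases hr : r ∈ s
      · rw [if_pos hr]
      · rw [if_neg hr]
        by_contra hne
        exact hr (hksupp r (fun hc => hne hc.symm))
  · -- I ∘ J = id on B
    intro b hb
    rw [hB, Finset.mem_sigma, Finset.mem_range] at hb
    obtain ⟨hn, -⟩ := hb
    have hmem : ∀ a ∈ b.2.parts, a ∈ s := hBparts b.1 (Finset.mem_range.mpr hn) b.2
    have hkey : pts (fun r => b.2.parts.count r) = b.2.parts := by
      apply Multiset.ext.mpr
      intro a
      rw [hcount]
      by_cases ha : a ∈ s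
      · rw [if_pos ha]
      · rw [if_neg ha]
        symm
        exact Multiset.count_eq_zero.mpr fun hc => ha (hmem a hc)
    have hsum1 : (pts (fun r => b.2.parts.count r)).sum = b.1 := by
      rw [hkey, b.2.parts_sum]
    rw [hI, hJ]
    simp only
    exact Sigma.ext hsum1 (partition_heq hsum1 hkey)
  · -- terms agree
    intro p hp
    rw [hA', Finset.mem_filter, hA, Finset.mem_sigma, Finset.mem_range] at hp
    obtain ⟨⟨hm, hk⟩, -⟩ := hp
    rw [Finset.mem_piAntidiag] at hk
    obtain ⟨hksum, hksupp⟩ := hk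
    rw [hT, hU, hI]
    simp only
    have hzeroout : ∀ r, r ∉ s → p.2 r = 0 := by
      intro r hr
      by_contra hne
      exact hr (hksupp r hne)
    have hcnt : ∀ r ∈ s, (pts p.2).count r = p.2 r := by
      intro r hr
      rw [hcount, if_pos hr]
    have hsub : (pts p.2).toFinset ⊆ s :=
      fun a ha => ((hmem_pts p.2 a).mp (Multiset.mem_toFinset.mp ha)).1
    have hzP : (zPartition (⟨pts p.2, fun {i} hi => hpos p.2 i hi, rfl⟩ : Nat.Partition (pts p.2).sum) : ℚ)
        = ∏ r ∈ s, ((r : ℚ) ^ p.2 r * ((p.2 r).factorial : ℚ)) := by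
      unfold zPartition
      simp only
      have e1 : ∏ i ∈ (pts p.2).toFinset, i ^ (pts p.2).count i * ((pts p.2).count i).factorial
          = ∏ r ∈ s, r ^ p.2 r * (p.2 r).factorial := by
        rw [Finset.prod_subset hsub]
        · exact Finset.prod_congr rfl fun r hr => by rw [hcnt r hr]
        · intro x hx hnx
          have : (pts p.2).count x = 0 :=
            Multiset.count_eq_zero.mpr fun hc => hnx (Multiset.mem_toFinset.mpr hc)
          rw [this]
          simp
      rw [e1]
      push_cast
      rfl
    have hprod : ((pts p.2).map (fun i => raise i f)).prod = ∏ r ∈ s, raise r f ^ p.2 r := by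
      rw [Finset.prod_multiset_map_count]
      rw [Finset.prod_subset hsub]
      · exact Finset.prod_congr rfl fun r hr => by rw [hcnt r hr]
      · intro x hx hnx
        have : (pts p.2).count x = 0 :=
          Multiset.count_eq_zero.mpr fun hc => hnx (Multiset.mem_toFinset.mpr hc)
        rw [this, pow_zero]
    rw [hzP, hprod]

lemma raise_one (f : QT) : raise 1 f = f := by
  ext d
  rw [coeff_raise, if_pos (fun i => one_dvd _)]
  have he : d.mapRange (· / 1) (Nat.zero_div 1) = d := by
    ext i
    simp [Finsupp.mapRange_apply]
  rw [he]

lemma hPleth_zero (f : QT) : hPleth 0 f = 1 := by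
  unfold hPleth
  rw [Finset.univ_unique, Finset.sum_singleton]
  have h1 : (default : Nat.Partition 0).parts = 0 := Nat.Partition.partition_zero_parts _
  rw [h1]
  simp [zPartition, h1]

lemma hPleth_one (f : QT) : hPleth 1 f = f := by
  unfold hPleth
  rw [Finset.univ_unique, Finset.sum_singleton]
  have h1 : (default : Nat.Partition 1).parts = {1} := Nat.Partition.partition_one_parts _
  rw [h1]
  simp [zPartition, h1, raise_one]

lemma EqB_PExp (f : QT) (h0 : MvPowerSeries.constantCoeff (σ := Fin 2) (R := ℚ) f = 0) (N : ℕ) :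
    EqB N (PExp f) (∑ n ∈ Finset.range (N + 1), hPleth n f) := by
  intro d hd
  rw [coeff_PExp f h0 d, map_sum]
  apply Finset.sum_subset
  · exact Finset.range_subset_range.mpr (by omega)
  · intro n hn hnot
    rw [Finset.mem_range] at hn hnot
    exact ordGE_hPleth h0 n d (by omega)

lemma geom_Icc (m : ℕ) : (1 - t) * ∑ i ∈ Finset.Icc 1 m, t ^ i = t - t ^ (m + 1) := by
  induction m with
  | zero => simp
  | succ m ih =>
    rw [Finset.sum_Icc_succ_top (by omega), mul_add, ih]
    ring

lemma t_pow_sub (n : ℕ) (hn : 3 ≤ n) :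
    t ^ n - t ^ 2 = -((1 - t) * t * ∑ i ∈ Finset.Icc 1 (n - 2), t ^ i) := by
  have h := geom_Icc (n - 2)
  have h2 : n - 2 + 1 = n - 1 := by omega
  rw [h2] at h
  have hn' : n = (n - 1) + 1 := by omega
  have h3 : t ^ n = t * t ^ (n - 1) := by
    conv_lhs => rw [hn']
    rw [pow_succ']
  linear_combination t * h + h3

end QT

open QT in
/-- If `q⁺ ∈ ℚ⟦q,t⟧` has no constant term and satisfies the recursion
`q⁺ = q + ∑_{r ≥ 3} (t + t² + ⋯ + t^{r-2}) (h_r ∘ q⁺)` (read coefficientwise: the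
term `h_r ∘ q⁺` has order ≥ r, so only `r ≤ deg d` contribute to the coefficient at
`d`), then `q⁺` satisfies the exponential equation
`Exp(t·q⁺) = t²·Exp(q⁺) + (1-t)(1+t+qt)`. -/
theorem qplus_recursion_implies_exponential (Qp : QT)
    (h0 : MvPowerSeries.constantCoeff (σ := Fin 2) (R := ℚ) Qp = 0)
    (hrec : ∀ d : Fin 2 →₀ ℕ,
      MvPowerSeries.coeff (R := ℚ) d Qp =
        MvPowerSeries.coeff (R := ℚ) d
          (q + ∑ r ∈ Finset.Icc 3 (deg d),
            (∑ i ∈ Finset.Icc 1 (r - 2), t ^ i) * hPleth r Qp)) :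
    PExp (t * Qp) = t ^ 2 * PExp Qp + (1 - t) * (1 + t + q * t) := by
  classical
  -- the recursion, rephrased with an arbitrary cutoff
  have Erec : ∀ N : ℕ, EqB N Qp
      (q + ∑ r ∈ Finset.Icc 3 N, (∑ i ∈ Finset.Icc 1 (r - 2), t ^ i) * hPleth r Qp) := by
    intro N d hd
    rw [hrec d, map_add, map_add, map_sum, map_sum]
    congr 1
    apply Finset.sum_subset (Finset.Icc_subset_Icc_right hd)
    intro r hr hnot
    have hlt : deg d < r := by
      simp only [Finset.mem_Icc] at hr hnot
      omega
    have hord := (ordGE_sum (Finset.Icc 1 (r - 2)) 0 (fun i => t ^ i)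
      (fun i _ => (ordGE_t_pow i).mono (Nat.zero_le _))).mul (ordGE_hPleth h0 r)
    simpa using hord d (by omega)
  ext d
  set N := deg d + 2 with hN
  have hd : deg d ≤ N := by omega
  have hN2 : 2 ≤ N := by omega
  have h0t : MvPowerSeries.constantCoeff (σ := Fin 2) (R := ℚ) (t * Qp) = 0 := by
    rw [map_mul, h0, mul_zero]
  set H : ℕ → QT := fun n => hPleth n Qp with hH
  have E1 : EqB N (PExp (t * Qp)) (∑ n ∈ Finset.range (N + 1), t ^ n * H n) :=
    (EqB_PExp (t * Qp) h0t N).trans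
      (EqB.of_eq (Finset.sum_congr rfl fun n _ => hPleth_t_mul n Qp))
  have E2 : EqB N (PExp Qp) (∑ n ∈ Finset.range (N + 1), H n) := EqB_PExp Qp h0 N
  have E3 : EqB N (∑ r ∈ Finset.Icc 3 N, (∑ i ∈ Finset.Icc 1 (r - 2), t ^ i) * H r)
      (Qp - q) := by
    intro e he
    have h := Erec N e he
    rw [map_add] at h
    rw [map_sub]
    rw [hH]
    linarith [h]
  -- the algebraic identity
  have hsplit : ∑ n ∈ Finset.range (N + 1), t ^ n * H n
        - t ^ 2 * ∑ n ∈ Finset.range (N + 1), H n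
      = (1 - t ^ 2) * H 0 + (t - t ^ 2) * H 1
        - (1 - t) * t * ∑ r ∈ Finset.Icc 3 N, (∑ i ∈ Finset.Icc 1 (r - 2), t ^ i) * H r := by
    rw [Finset.mul_sum, ← Finset.sum_sub_distrib]
    have e : ∀ n : ℕ, t ^ n * H n - t ^ 2 * H n = (t ^ n - t ^ 2) * H n := fun n => by ring
    simp_rw [e]
    have hsplit2 : ∑ n ∈ Finset.Ico 0 3, (t ^ n - t ^ 2) * H n
          + ∑ n ∈ Finset.Ico 3 (N + 1), (t ^ n - t ^ 2) * H n
        = ∑ n ∈ Finset.Ico 0 (N + 1), (t ^ n - t ^ 2) * H n :=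
      Finset.sum_Ico_consecutive _ (by omega) (by omega)
    rw [Finset.range_eq_Ico, ← hsplit2]
    have h03 : ∑ n ∈ Finset.Ico 0 3, (t ^ n - t ^ 2) * H n
        = (1 - t ^ 2) * H 0 + (t - t ^ 2) * H 1 := by
      rw [← Finset.range_eq_Ico]
      rw [Finset.sum_range_succ, Finset.sum_range_succ, Finset.sum_range_succ,
        Finset.sum_range_zero]
      simp only [pow_zero, pow_one]
      ring
    rw [h03, Finset.Ico_add_one_right_eq_Icc]
    have h3N : ∑ n ∈ Finset.Icc 3 N, (t ^ n - t ^ 2) * H n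
        = -((1 - t) * t * ∑ r ∈ Finset.Icc 3 N, (∑ i ∈ Finset.Icc 1 (r - 2), t ^ i) * H r) := by
      rw [Finset.mul_sum, ← Finset.sum_neg_distrib]
      refine Finset.sum_congr rfl fun n hn => ?_
      rw [Finset.mem_Icc] at hn
      rw [t_pow_sub n hn.1]
      ring
    rw [h3N]
    ring
  have E4 : EqB N (∑ n ∈ Finset.range (N + 1), t ^ n * H n)
      (t ^ 2 * (∑ n ∈ Finset.range (N + 1), H n) + (1 - t) * (1 + t + q * t)) := by
    intro e he
    have hval := (EqB.of_eq hsplit) e he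
    have hsub := (EqB.mul (EqB.mul (EqB.refl (A := 1 - t)) (EqB.refl (A := t))) E3) e he
    have hfin : (1 - t ^ 2) * H 0 + (t - t ^ 2) * H 1 - (1 - t) * t * (Qp - q)
        = (1 - t) * (1 + t + q * t) := by
      rw [hH]
      simp only
      rw [hPleth_zero, hPleth_one]
      ring
    rw [map_sub, map_sub, map_add] at hval
    have hfinc := congrArg (MvPowerSeries.coeff (R := ℚ) e) hfin
    rw [map_sub, map_add] at hfinc
    rw [map_add]
    linarith [hval, hsub, hfinc]
  calc MvPowerSeries.coeff (R := ℚ) d (PExp (t * Qp))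
      = MvPowerSeries.coeff (R := ℚ) d (∑ n ∈ Finset.range (N + 1), t ^ n * H n) := E1 d hd
    _ = MvPowerSeries.coeff (R := ℚ) d
          (t ^ 2 * (∑ n ∈ Finset.range (N + 1), H n) + (1 - t) * (1 + t + q * t)) := E4 d hd
    _ = MvPowerSeries.coeff (R := ℚ) d (t ^ 2 * PExp Qp + (1 - t) * (1 + t + q * t)) :=
        ((EqB.add (EqB.mul EqB.refl E2) EqB.refl).symm) d hd
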